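/- arXiv:2605.26909 — 3 statements merged into one kernel-verified Lean document; each statement's English description precedes it below -/
import Mathlib

section
/- Under the standing hypotheses, with φ* := lim_k R_k, the partial sums satisfy Σ_{j=1}^{k} p_min σ a (τ_{j−1}²/τ_max) ‖d^{j−1}‖² ≤ R_0 − φ* for all k ∈ ℕ; consequently τ_k d^k → 0 as k → ∞. -/
open Set Filter Topology

noncomputable section

variable {E : Type*} [NormedAddCommGroup E] [InnerProductSpace ℝ E] [FiniteDimensional ℝ E]

open Classical in
/-- The indicator function of a set `M` (`0` on `M`, `+∞` elsewhere), with values in `EReal`. -/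
def indicatorFun (M : Set E) (x : E) : EReal := if x ∈ M then 0 else ⊤

/-- The Fréchet (regular) subdifferential of an extended-real-valued function `g` at `x`. -/
def frechetSubdiff (g : E → EReal) (x : E) : Set E :=
  {v | ∀ ε : ℝ, 0 < ε →
    ∀ᶠ y in 𝓝 x, g x + (((inner ℝ v (y - x) : ℝ) - ε * ‖y - x‖ : ℝ) : EReal) ≤ g y}

/-- The limiting (Mordukhovich) subdifferential of `g` at `x`. -/
def limitingSubdiff (g : E → EReal) (x : E) : Set E :=
  {v | ∃ xs vs : ℕ → E,
    Tendsto xs atTop (𝓝 x) ∧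
    Tendsto (fun n => g (xs n)) atTop (𝓝 (g x)) ∧
    (∀ n, vs n ∈ frechetSubdiff g (xs n)) ∧
    Tendsto vs atTop (𝓝 v)}

/-- The projectional limiting subdifferential of `g` at `x` relative to `M`:
the orthogonal projection onto the tangent space `T x` of the limiting
subdifferential of `g + δ_M` at `x`. -/
def projSubdiff (g : E → ℝ) (M : Set E) (T : E → Submodule ℝ E) (x : E) : Set E :=
  (fun v => (((T x).orthogonalProjectionOnto v : T x) : E)) ''
    limitingSubdiff (fun y => (g y : EReal) + indicatorFun M y) x

/-- `M ⊆ E` is a smooth embedded submanifold with tangent spaces `T x`: around each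
point of `M` there is a `C¹` local defining function with surjective derivative at
that point, and on `M` the tangent space is the kernel of the derivative. -/
def IsSubmanifold (M : Set E) (T : E → Submodule ℝ E) : Prop :=
  ∀ x ∈ M, ∃ (m : ℕ) (U : Set E) (F : E → (Fin m → ℝ)),
    IsOpen U ∧ x ∈ U ∧ ContDiffOn ℝ 1 F U ∧
    Function.Surjective ⇑(fderiv ℝ F x) ∧
    M ∩ U = {y ∈ U | F y = 0} ∧
    ∀ y ∈ M ∩ U, T y = LinearMap.ker (fderiv ℝ F y : E →ₗ[ℝ] (Fin m → ℝ))

/-- A retraction on the submanifold `M` with tangent spaces `T`: a `C²` map on the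
tangent bundle with values in `M` such that `R_x(0) = x` and `DR_x(0) = id`. -/
structure Retraction (M : Set E) (T : E → Submodule ℝ E) where
  R : E → E → E
  mem_target : ∀ x ∈ M, ∀ ξ ∈ T x, R x ξ ∈ M
  map_zero : ∀ x ∈ M, R x 0 = x
  smooth : ContDiffOn ℝ 2 (fun p : E × E => R p.1 p.2) {p : E × E | p.1 ∈ M ∧ p.2 ∈ T p.1}
  deriv_id : ∀ x ∈ M, ∀ ξ ∈ T x, HasDerivAt (fun t : ℝ => R x (t • ξ)) ξ 0

/-- Assumption A1: a local nonsmooth descent property of `φ` along the retraction,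
together with local boundedness of the projectional subdifferential on `M`. -/
def AssumptionA1 (M : Set E) (T : E → Submodule ℝ E) (Ret : Retraction M T) (φ : E → ℝ) : Prop :=
  (∀ z ∈ M, ∃ κ > (0:ℝ), ∃ r > (0:ℝ), ∃ O : Set E, IsOpen O ∧ z ∈ O ∧
    ∀ x ∈ M ∩ O, ∀ ξ ∈ T x, ‖ξ‖ ≤ r → ∀ w ∈ projSubdiff φ M T x,
      φ (Ret.R x ξ) - (φ x + (inner ℝ w ξ : ℝ)) ≤ κ * ‖ξ‖ ^ 2) ∧
  (∀ z ∈ M, ∃ ρ > (0:ℝ), ∃ c : ℝ, ∀ x ∈ M, ‖x - z‖ < ρ →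
    ∀ w ∈ projSubdiff φ M T x, ‖w‖ ≤ c)

/-- A run of the nonmonotone subgradient method on the manifold `M`:
subgradients `w k`, directions `d k`, stepsizes `τ k` obtained by backtracking
from initial trial stepsizes `τhat k` (with `j k` backtracking steps), iterates
`x k` and reference values `Rv k` updated by the mean-rule with weights `p k`. -/
structure AlgSeq (M : Set E) (T : E → Submodule ℝ E) (Ret : Retraction M T) (φ : E → ℝ)
    (σ β τmin τmax pmin a b : ℝ) where
  x : ℕ → E
  w : ℕ → E
  d : ℕ → E
  τhat : ℕ → ℝ
  j : ℕ → ℕ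
  τ : ℕ → ℝ
  p : ℕ → ℝ
  Rv : ℕ → ℝ
  x_mem : ∀ k, x k ∈ M
  w_mem : ∀ k, w k ∈ projSubdiff φ M T (x k)
  w_ne : ∀ k, w k ≠ 0
  d_mem : ∀ k, d k ∈ T (x k)
  d_ne : ∀ k, d k ≠ 0
  descent : ∀ k, (inner ℝ (w k) (d k) : ℝ) ≤ -a * ‖d k‖ ^ 2
  dir_bound : ∀ k, ‖w k‖ ≤ b * ‖d k‖
  τhat_mem : ∀ k, τhat k ∈ Set.Icc τmin τmax
  τ_def : ∀ k, τ k = β ^ (j k) * τhat k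
  j_least : ∀ k, IsLeast {i : ℕ |
      φ (Ret.R (x k) ((β ^ i * τhat k) • d k)) ≤
        Rv k + σ * (β ^ i * τhat k) * (inner ℝ (w k) (d k) : ℝ)} (j k)
  x_succ : ∀ k, x (k + 1) = Ret.R (x k) (τ k • d k)
  p_mem : ∀ k, p (k + 1) ∈ Set.Icc pmin 1
  R_zero : Rv 0 = φ (x 0)
  R_succ : ∀ k, Rv (k + 1) = (1 - p (k + 1)) * Rv k + p (k + 1) * φ (x (k + 1))

/-- Telescoping bound on the partial sums; consequently `τ_k d^k → 0`. -/
theorem stmt7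
    (M : Set E) (T : E → Submodule ℝ E) (Ret : Retraction M T) (φ : E → ℝ)
    (σ β τmin τmax pmin a b : ℝ)
    (hσ : σ ∈ Set.Ioo (0:ℝ) 1) (hβ : β ∈ Set.Ioo (0:ℝ) 1)
    (hτmin : 0 < τmin) (hττ : τmin ≤ τmax)
    (hpmin : pmin ∈ Set.Ioc (0:ℝ) 1) (ha : 0 < a) (hb : 0 < b)
    (hM : IsSubmanifold M T)
    (hφcont : ContinuousOn φ M)
    (hφbdd : BddBelow (φ '' M))
    (hA1 : AssumptionA1 M T Ret φ)
    (A : AlgSeq M T Ret φ σ β τmin τmax pmin a b)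
    (φstar : ℝ) (hφstar : Tendsto A.Rv atTop (𝓝 φstar)) :
    (∀ k : ℕ, ∑ i ∈ Finset.range k,
        pmin * σ * a * ((A.τ i) ^ 2 / τmax) * ‖A.d i‖ ^ 2 ≤ A.Rv 0 - φstar) ∧
    Tendsto (fun k => A.τ k • A.d k) atTop (𝓝 (0 : E)) := by

  have hσ0 := hσ.1
  have hσ1 := hσ.2
  have hp0 := hpmin.1
  have hτmax : (0:ℝ) < τmax := lt_of_lt_of_le hτmin hττ
  have hτpos : ∀ k, 0 < A.τ k := by
    intro k
    rw [A.τ_def k]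
    exact mul_pos (pow_pos hβ.1 _) (lt_of_lt_of_le hτmin (A.τhat_mem k).1)
  have hτle : ∀ k, A.τ k ≤ τmax := by
    intro k
    rw [A.τ_def k]
    calc β ^ A.j k * A.τhat k ≤ 1 * τmax := by
          apply mul_le_mul (pow_le_one₀ hβ.1.le hβ.2.le) (A.τhat_mem k).2
            (le_of_lt (lt_of_lt_of_le hτmin (A.τhat_mem k).1)) zero_le_one
      _ = τmax := one_mul _
  have hQ : ∀ k, (0:ℝ) ≤ σ * A.τ k * a * ‖A.d k‖ ^ 2 := by
    intro k
    have := (hτpos k).le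
    positivity
  have hφsucc : ∀ k, φ (A.x (k+1)) ≤ A.Rv k - σ * A.τ k * a * ‖A.d k‖ ^ 2 := by
    intro k
    have h := (A.j_least k).1
    simp only [Set.mem_setOf_eq] at h
    rw [← A.τ_def k] at h
    rw [A.x_succ k]
    have hστ : (0:ℝ) ≤ σ * A.τ k := mul_nonneg hσ.1.le (hτpos k).le
    have h2 : σ * A.τ k * (inner ℝ (A.w k) (A.d k) : ℝ) ≤ σ * A.τ k * (-a * ‖A.d k‖ ^ 2) :=
      mul_le_mul_of_nonneg_left (A.descent k) hστ
    nlinarith [h, h2]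
  have key : ∀ k, A.Rv (k+1) ≤ A.Rv k - pmin * (σ * A.τ k * a * ‖A.d k‖ ^ 2) := by
    intro k
    have hp := A.p_mem k
    have hRv := A.R_succ k
    have hφ := hφsucc k
    have hQk := hQ k
    nlinarith [mul_le_mul_of_nonneg_left hφ (lt_of_lt_of_le hpmin.1 hp.1).le,
      mul_le_mul_of_nonneg_right hp.1 hQk]
  have hterm_le : ∀ k, pmin * σ * a * ((A.τ k) ^ 2 / τmax) * ‖A.d k‖ ^ 2 ≤
      A.Rv k - A.Rv (k+1) := by
    intro k
    have h1 : (A.τ k) ^ 2 / τmax ≤ A.τ k := by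
      rw [div_le_iff₀ hτmax]
      nlinarith [hτle k, hτpos k]
    have h2 : pmin * σ * a * ((A.τ k) ^ 2 / τmax) * ‖A.d k‖ ^ 2 ≤
        pmin * (σ * A.τ k * a * ‖A.d k‖ ^ 2) := by
      have := mul_le_mul_of_nonneg_left h1 (by positivity : (0:ℝ) ≤ pmin * σ * a)
      nlinarith [sq_nonneg ‖A.d k‖, mul_le_mul_of_nonneg_right this (sq_nonneg ‖A.d k‖)]
    linarith [key k]
  have hanti : Antitone A.Rv := by
    apply antitone_nat_of_succ_le
    intro k
    have := key k
    nlinarith [hQ k, mul_le_mul_of_nonneg_right hpmin.1.le (hQ k)]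
  have hRvk_ge : ∀ k, φstar ≤ A.Rv k := by
    intro k
    exact le_of_tendsto hφstar (eventually_atTop.2 ⟨k, fun n hn => hanti hn⟩)
  have hsum : ∀ k : ℕ, ∑ i ∈ Finset.range k,
      pmin * σ * a * ((A.τ i) ^ 2 / τmax) * ‖A.d i‖ ^ 2 ≤ A.Rv 0 - A.Rv k := by
    intro k
    induction k with
    | zero => simp
    | succ n ih =>
      rw [Finset.sum_range_succ]
      linarith [hterm_le n, ih]
  constructor
  · intro k
    linarith [hsum k, hRvk_ge k]
  · have hterm_nonneg : ∀ k, (0:ℝ) ≤ pmin * σ * a * ((A.τ k) ^ 2 / τmax) * ‖A.d k‖ ^ 2 := by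
      intro k
      have := (hτpos k).le
      positivity
    have hsummable : Summable (fun k => pmin * σ * a * ((A.τ k) ^ 2 / τmax) * ‖A.d k‖ ^ 2) := by
      apply summable_of_sum_range_le (c := A.Rv 0 - φstar) hterm_nonneg
      intro n
      linarith [hsum n, hRvk_ge n]
    have hterm0 := hsummable.tendsto_atTop_zero
    have hc : (0:ℝ) < pmin * σ * a / τmax := by positivity
    have heq2 : (fun k => pmin * σ * a * ((A.τ k) ^ 2 / τmax) * ‖A.d k‖ ^ 2) =
        fun k => (pmin * σ * a / τmax) * ‖A.τ k • A.d k‖ ^ 2 := by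
      funext k
      rw [norm_smul, Real.norm_eq_abs, abs_of_pos (hτpos k), mul_pow]
      ring
    rw [heq2] at hterm0
    have hg0 : Tendsto (fun k => ‖A.τ k • A.d k‖ ^ 2) atTop (𝓝 0) := by
      have h := hterm0.const_mul (pmin * σ * a / τmax)⁻¹
      rw [mul_zero] at h
      refine h.congr fun k => ?_
      rw [← mul_assoc, inv_mul_cancel₀ hc.ne', one_mul]
    have hnorm0 : Tendsto (fun k => ‖A.τ k • A.d k‖) atTop (𝓝 0) := by
      have hsqrt := (Real.continuous_sqrt.tendsto 0).comp hg0
      simp only [Function.comp_def, Real.sqrt_sq (norm_nonneg _), Real.sqrt_zero] at hsqrt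
      exact hsqrt
    exact tendsto_zero_iff_norm_tendsto_zero.mpr hnorm0


end
end

section
/- Under the standing hypotheses, with φ* := lim_k R_k and c := √(τ_max/(p_min σ a)), one has min_{0 ≤ j ≤ k} τ_j ‖d^j‖ ≤ c √(R_0 − φ*) / √(k+1) for all k ∈ ℕ. -/
open Set Filter Topology

noncomputable section

variable {E : Type*} [NormedAddCommGroup E] [InnerProductSpace ℝ E] [FiniteDimensional ℝ E]

/-- Complexity estimate: `min_{0 ≤ j ≤ k} τ_j ‖d^j‖ ≤ c √(R_0 - φ*) / √(k+1)`
with `c = √(τmax / (pmin σ a))`. -/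
theorem stmt8
    (M : Set E) (T : E → Submodule ℝ E) (Ret : Retraction M T) (φ : E → ℝ)
    (σ β τmin τmax pmin a b : ℝ)
    (hσ : σ ∈ Set.Ioo (0:ℝ) 1) (hβ : β ∈ Set.Ioo (0:ℝ) 1)
    (hτmin : 0 < τmin) (hττ : τmin ≤ τmax)
    (hpmin : pmin ∈ Set.Ioc (0:ℝ) 1) (ha : 0 < a) (hb : 0 < b)
    (hM : IsSubmanifold M T)
    (hφcont : ContinuousOn φ M)
    (hφbdd : BddBelow (φ '' M))
    (hA1 : AssumptionA1 M T Ret φ)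
    (A : AlgSeq M T Ret φ σ β τmin τmax pmin a b)
    (φstar : ℝ) (hφstar : Tendsto A.Rv atTop (𝓝 φstar)) :
    ∀ k : ℕ, ∃ i ≤ k, A.τ i * ‖A.d i‖ ≤
      Real.sqrt (τmax / (pmin * σ * a)) * Real.sqrt (A.Rv 0 - φstar) /
        Real.sqrt ((k : ℝ) + 1) := by
  have hσ0 := hσ.1
  have hβ0 := hβ.1
  have hβ1 := hβ.2
  have hp0 := hpmin.1
  have hτmax : (0:ℝ) < τmax := lt_of_lt_of_le hτmin hττ
  have hden : (0:ℝ) < pmin * σ * a := mul_pos (mul_pos hp0 hσ0) ha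
  have hτpos : ∀ n, 0 < A.τ n := by
    intro n
    rw [A.τ_def n]
    exact mul_pos (pow_pos hβ0 _) (lt_of_lt_of_le hτmin (A.τhat_mem n).1)
  have hτle : ∀ n, A.τ n ≤ τmax := by
    intro n
    rw [A.τ_def n]
    have h1 : β ^ (A.j n) ≤ 1 := pow_le_one₀ hβ0.le hβ1.le
    have h2 := (A.τhat_mem n).2
    have h3 : 0 ≤ A.τhat n := le_trans hτmin.le (A.τhat_mem n).1
    nlinarith
  have hstep : ∀ n, φ (A.x (n+1)) ≤ A.Rv n - σ * a * A.τ n * ‖A.d n‖ ^ 2 := by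
    intro n
    have h := (A.j_least n).1
    simp only [Set.mem_setOf_eq] at h
    rw [← A.τ_def n, ← A.x_succ n] at h
    have hinner := A.descent n
    have hστ : 0 ≤ σ * A.τ n := mul_nonneg hσ0.le (hτpos n).le
    nlinarith [mul_le_mul_of_nonneg_left hinner hστ]
  have hs_pos : ∀ n, 0 < σ * a * A.τ n * ‖A.d n‖ ^ 2 := by
    intro n
    have hd : 0 < ‖A.d n‖ := norm_pos_iff.mpr (A.d_ne n)
    exact mul_pos (mul_pos (mul_pos hσ0 ha) (hτpos n)) (pow_pos hd 2)
  have hRsucc : ∀ n, A.Rv (n+1) ≤ A.Rv n - pmin * (σ * a * A.τ n * ‖A.d n‖ ^ 2) := by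
    intro n
    have hp := A.p_mem n
    have h1 := hstep n
    have hsk := hs_pos n
    have hpn : 0 ≤ A.p (n+1) := le_trans hp0.le hp.1
    rw [A.R_succ n]
    nlinarith [mul_le_mul_of_nonneg_left h1 hpn,
      mul_nonneg (sub_nonneg.mpr hp.1) hsk.le]
  have hRanti : ∀ n, A.Rv (n+1) ≤ A.Rv n := by
    intro n
    have := hRsucc n
    have := mul_pos hp0 (hs_pos n)
    linarith
  have hanti : Antitone A.Rv := antitone_nat_of_succ_le hRanti
  have hφle : ∀ n, φstar ≤ A.Rv n := by
    intro n
    apply le_of_tendsto hφstar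
    filter_upwards [eventually_ge_atTop n] with m hm
    exact hanti hm
  have hsum : ∀ n : ℕ, ∑ i ∈ Finset.range (n+1),
      pmin * (σ * a * A.τ i * ‖A.d i‖ ^ 2) ≤ A.Rv 0 - φstar := by
    intro n
    calc ∑ i ∈ Finset.range (n+1), pmin * (σ * a * A.τ i * ‖A.d i‖ ^ 2)
        ≤ ∑ i ∈ Finset.range (n+1), (A.Rv i - A.Rv (i+1)) :=
          Finset.sum_le_sum fun i _ => by linarith [hRsucc i]
      _ = A.Rv 0 - A.Rv (n+1) := Finset.sum_range_sub' A.Rv (n+1)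
      _ ≤ A.Rv 0 - φstar := by linarith [hφle (n+1)]
  intro k
  obtain ⟨i, hi, hmin⟩ := Finset.exists_min_image (Finset.range (k+1))
    (fun i => A.τ i * ‖A.d i‖) ⟨0, Finset.mem_range.mpr (Nat.succ_pos k)⟩
  refine ⟨i, Nat.lt_succ_iff.mp (Finset.mem_range.mp hi), ?_⟩
  have hfn : 0 ≤ A.τ i * ‖A.d i‖ := mul_nonneg (hτpos i).le (norm_nonneg _)
  have hk1 : (0:ℝ) < (k:ℝ) + 1 := by positivity
  have key : ((k:ℝ)+1) * (A.τ i * ‖A.d i‖)^2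
      ≤ (τmax / (pmin * σ * a)) * (A.Rv 0 - φstar) := by
    have h1 : ((k:ℝ)+1) * (A.τ i * ‖A.d i‖)^2
        = ∑ _j ∈ Finset.range (k+1), (A.τ i * ‖A.d i‖)^2 := by
      rw [Finset.sum_const, Finset.card_range]
      push_cast
      ring
    rw [h1]
    calc ∑ j ∈ Finset.range (k+1), (A.τ i * ‖A.d i‖)^2
        ≤ ∑ j ∈ Finset.range (k+1),
            (τmax / (pmin * σ * a)) * (pmin * (σ * a * A.τ j * ‖A.d j‖ ^ 2)) := by
          apply Finset.sum_le_sum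
          intro j hj
          have h2 : A.τ i * ‖A.d i‖ ≤ A.τ j * ‖A.d j‖ := hmin j hj
          have h3 : (A.τ i * ‖A.d i‖)^2 ≤ (A.τ j * ‖A.d j‖)^2 :=
            pow_le_pow_left₀ hfn h2 2
          have h4 : (A.τ j * ‖A.d j‖)^2 ≤ τmax * (A.τ j * ‖A.d j‖ ^ 2) := by
            have h5 := hτle j
            have h6 := (hτpos j).le
            nlinarith [mul_le_mul_of_nonneg_right h5
              (mul_nonneg h6 (sq_nonneg ‖A.d j‖))]
          have h7 : (τmax / (pmin * σ * a)) * (pmin * (σ * a * A.τ j * ‖A.d j‖ ^ 2))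
              = τmax * (A.τ j * ‖A.d j‖ ^ 2) := by
            field_simp
          rw [h7]
          exact le_trans h3 h4
      _ = (τmax / (pmin * σ * a)) *
            ∑ j ∈ Finset.range (k+1), pmin * (σ * a * A.τ j * ‖A.d j‖ ^ 2) :=
          (Finset.mul_sum _ _ _).symm
      _ ≤ (τmax / (pmin * σ * a)) * (A.Rv 0 - φstar) :=
          mul_le_mul_of_nonneg_left (hsum k) (div_nonneg hτmax.le hden.le)
  have hX : (A.τ i * ‖A.d i‖)^2
      ≤ (τmax / (pmin * σ * a)) * (A.Rv 0 - φstar) / ((k:ℝ)+1) := by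
    rw [le_div_iff₀ hk1, mul_comm]
    exact key
  have hmain : A.τ i * ‖A.d i‖ ≤
      Real.sqrt ((τmax / (pmin * σ * a)) * (A.Rv 0 - φstar) / ((k:ℝ)+1)) := by
    rw [show A.τ i * ‖A.d i‖ = Real.sqrt ((A.τ i * ‖A.d i‖)^2) from
      (Real.sqrt_sq hfn).symm]
    exact Real.sqrt_le_sqrt hX
  have hA : (0:ℝ) ≤ τmax / (pmin * σ * a) := div_nonneg hτmax.le hden.le
  have hB : (0:ℝ) ≤ A.Rv 0 - φstar := by linarith [hφle 0]
  rwa [Real.sqrt_div (mul_nonneg hA hB), Real.sqrt_mul hA] at hmain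

end
end

section
/- Under the standing hypotheses and the KL-setup data, with Ξ_k := √(R_k − R_{k+1}) and e := (1/α)·√(p_min σ a / τ_max), for all sufficiently large k with x^k ∈ C one has e·‖x^{k+1} − x^k‖ ≤ Ξ_k. -/
open Set Filter Topology

noncomputable section

variable {E : Type*} [NormedAddCommGroup E] [InnerProductSpace ℝ E] [FiniteDimensional ℝ E]

/-- With `Ξ_k := √(R_k - R_{k+1})` and `e := (1/α)√(pmin σ a / τmax)`, the step
lengths are bounded by `e ‖x^{k+1} - x^k‖ ≤ Ξ_k` on `C`. -/
theorem stmt13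
    (M : Set E) (T : E → Submodule ℝ E) (Ret : Retraction M T) (φ : E → ℝ)
    (σ β τmin τmax pmin a b : ℝ)
    (hσ : σ ∈ Set.Ioo (0:ℝ) 1) (hβ : β ∈ Set.Ioo (0:ℝ) 1)
    (hτmin : 0 < τmin) (hττ : τmin ≤ τmax)
    (hpmin : pmin ∈ Set.Ioc (0:ℝ) 1) (ha : 0 < a) (hb : 0 < b)
    (hM : IsSubmanifold M T)
    (hφcont : ContinuousOn φ M)
    (hφbdd : BddBelow (φ '' M))
    (hA1 : AssumptionA1 M T Ret φ)
    (A : AlgSeq M T Ret φ σ β τmin τmax pmin a b)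
    (xstar : E) (ψ : ℕ → ℕ) (hψ : StrictMono ψ)
    (hacc : Tendsto (fun n => A.x (ψ n)) atTop (𝓝 xstar))
    (C : Set E) (hCM : C ⊆ M) (hCcomp : IsCompact C)
    (hCint : ∃ O : Set E, IsOpen O ∧ xstar ∈ O ∧ M ∩ O ⊆ C)
    (hCφ : ∀ y ∈ C, φ y ≤ A.Rv 0)
    (τC : ℝ) (hτC : 0 < τC) (hτCk : ∀ k, A.x k ∈ C → τC ≤ A.τ k)
    (α r : ℝ) (hα : 0 < α) (hr : 0 < r)
    (hretr : ∀ x ∈ C, ∀ ξ ∈ T x, ‖ξ‖ ≤ r → ‖Ret.R x ξ - x‖ ≤ α * ‖ξ‖)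
    :
    ∃ N : ℕ, ∀ k ≥ N, A.x k ∈ C →
      (1 / α) * Real.sqrt (pmin * σ * a / τmax) * ‖A.x (k + 1) - A.x k‖ ≤
        Real.sqrt (A.Rv k - A.Rv (k + 1)) := by
  have hτmaxpos : 0 < τmax := lt_of_lt_of_le hτmin hττ
  have hτpos : ∀ k, 0 < A.τ k := by
    intro k
    rw [A.τ_def k]
    exact mul_pos (pow_pos hβ.1 _) (lt_of_lt_of_le hτmin (A.τhat_mem k).1)
  have hτle : ∀ k, A.τ k ≤ τmax := by
    intro k
    rw [A.τ_def k]
    calc β ^ A.j k * A.τhat k ≤ 1 * A.τhat k := by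
          apply mul_le_mul_of_nonneg_right _ (le_trans hτmin.le (A.τhat_mem k).1)
          exact pow_le_one₀ hβ.1.le hβ.2.le
      _ = A.τhat k := one_mul _
      _ ≤ τmax := (A.τhat_mem k).2
  have hstep : ∀ k, φ (A.x (k+1)) ≤ A.Rv k + σ * A.τ k * (inner ℝ (A.w k) (A.d k) : ℝ) := by
    intro k
    have h := (A.j_least k).1
    rw [A.x_succ k, A.τ_def k]
    exact h
  have hRdrop : ∀ k, pmin * σ * a * (A.τ k * ‖A.d k‖ ^ 2) ≤ A.Rv k - A.Rv (k+1) := by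
    intro k
    have hst := hstep k
    have hip := A.descent k
    have hp1 := (A.p_mem k).1
    have hp2 := (A.p_mem k).2
    have hR := A.R_succ k
    have hτ := hτpos k
    have hστ : 0 < σ * A.τ k := mul_pos hσ.1 hτ
    have h1 : σ * A.τ k * (inner ℝ (A.w k) (A.d k) : ℝ) ≤ σ * A.τ k * (-a * ‖A.d k‖^2) :=
      mul_le_mul_of_nonneg_left hip hστ.le
    have h2 : φ (A.x (k+1)) - A.Rv k ≤ -(σ * A.τ k * a * ‖A.d k‖^2) := by nlinarith
    have hnn : 0 ≤ σ * A.τ k * a * ‖A.d k‖^2 := by positivity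
    have hX : φ (A.x (k+1)) - A.Rv k ≤ 0 := by linarith
    have h4 : A.p (k+1) * (φ (A.x (k+1)) - A.Rv k) ≤ pmin * (φ (A.x (k+1)) - A.Rv k) :=
      mul_le_mul_of_nonpos_right hp1 hX
    have h5 : pmin * (φ (A.x (k+1)) - A.Rv k) ≤ pmin * (-(σ * A.τ k * a * ‖A.d k‖^2)) :=
      mul_le_mul_of_nonneg_left h2 hpmin.1.le
    nlinarith [h4, h5, hR]
  have hdropnn : ∀ k, 0 ≤ pmin * σ * a * (A.τ k * ‖A.d k‖ ^ 2) := by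
    intro k
    exact mul_nonneg (mul_nonneg (mul_nonneg hpmin.1.le hσ.1.le) ha.le)
      (mul_nonneg (hτpos k).le (sq_nonneg _))
  have hAnti : Antitone A.Rv := antitone_nat_of_succ_le fun k => by
    have := hRdrop k; have := hdropnn k; linarith
  obtain ⟨m, hm⟩ := hφbdd
  have hmlb : ∀ y ∈ M, m ≤ φ y := fun y hy => hm ⟨y, hy, rfl⟩
  have hRlb : ∀ k, m ≤ A.Rv k := by
    intro k
    induction k with
    | zero => rw [A.R_zero]; exact hmlb _ (A.x_mem 0)
    | succ n ih =>
      rw [A.R_succ n]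
      have h1 := hmlb _ (A.x_mem (n+1))
      have hp0 : 0 ≤ A.p (n+1) := le_trans hpmin.1.le (A.p_mem n).1
      have hp1 : A.p (n+1) ≤ 1 := (A.p_mem n).2
      nlinarith [mul_nonneg (by linarith : (0:ℝ) ≤ 1 - A.p (n+1)) (by linarith : 0 ≤ A.Rv n - m),
        mul_nonneg hp0 (by linarith : 0 ≤ φ (A.x (n+1)) - m)]
  have hbdd : BddBelow (Set.range A.Rv) := ⟨m, by rintro _ ⟨k, rfl⟩; exact hRlb k⟩
  have hconvR : Tendsto A.Rv atTop (𝓝 (⨅ k, A.Rv k)) := tendsto_atTop_ciInf hAnti hbdd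
  have hshift : Tendsto (fun k => A.Rv (k+1)) atTop (𝓝 (⨅ k, A.Rv k)) :=
    hconvR.comp (tendsto_add_atTop_nat 1)
  have hdiff : Tendsto (fun k => A.Rv k - A.Rv (k+1)) atTop (𝓝 0) := by
    simpa using hconvR.sub hshift
  have hε : 0 < pmin * σ * a * τC * (r / τmax)^2 :=
    mul_pos (mul_pos (mul_pos (mul_pos hpmin.1 hσ.1) ha) hτC)
      (pow_pos (div_pos hr hτmaxpos) 2)
  have hev : ∀ᶠ k in atTop, A.Rv k - A.Rv (k+1) < pmin * σ * a * τC * (r / τmax)^2 :=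
    hdiff.eventually (gt_mem_nhds hε)
  obtain ⟨N, hN⟩ := eventually_atTop.1 hev
  refine ⟨N, fun k hk hxC => ?_⟩
  have hDk := hRdrop k
  have hDlt := hN k hk
  have hτCk' := hτCk k hxC
  have hcnn : (0:ℝ) ≤ pmin * σ * a := mul_nonneg (mul_nonneg hpmin.1.le hσ.1.le) ha.le
  have hd2 : ‖A.d k‖ ^ 2 < (r / τmax)^2 := by
    have hcpos : (0:ℝ) < pmin * σ * a * τC :=
      mul_pos (mul_pos (mul_pos hpmin.1 hσ.1) ha) hτC
    have hmono : pmin * σ * a * (τC * ‖A.d k‖^2) ≤ pmin * σ * a * (A.τ k * ‖A.d k‖^2) :=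
      mul_le_mul_of_nonneg_left (mul_le_mul_of_nonneg_right hτCk' (sq_nonneg _)) hcnn
    have hlt : (pmin * σ * a * τC) * ‖A.d k‖^2 < (pmin * σ * a * τC) * (r/τmax)^2 := by
      nlinarith [hmono, hDk, hDlt]
    exact lt_of_mul_lt_mul_left hlt hcpos.le
  have hdle : ‖A.d k‖ ≤ r / τmax := by
    nlinarith [hd2, norm_nonneg (A.d k), div_pos hr hτmaxpos]
  have hnorm : ‖A.τ k • A.d k‖ = A.τ k * ‖A.d k‖ := by
    rw [norm_smul, Real.norm_eq_abs, abs_of_pos (hτpos k)]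
  have hξ : ‖A.τ k • A.d k‖ ≤ r := by
    rw [hnorm]
    calc A.τ k * ‖A.d k‖ ≤ τmax * (r / τmax) :=
          mul_le_mul (hτle k) hdle (norm_nonneg _) hτmaxpos.le
      _ = r := by field_simp
  have hΔ : ‖A.x (k+1) - A.x k‖ ≤ α * (A.τ k * ‖A.d k‖) := by
    rw [A.x_succ k, ← hnorm]
    exact hretr _ hxC _ (Submodule.smul_mem _ _ (A.d_mem k)) hξ
  have hcτnn : (0:ℝ) ≤ pmin * σ * a / τmax := div_nonneg hcnn hτmaxpos.le
  have h6 : 1/α * ‖A.x (k+1) - A.x k‖ ≤ A.τ k * ‖A.d k‖ := by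
    rw [one_div, inv_mul_le_iff₀ hα]
    linarith [hΔ]
  have hτdnn : 0 ≤ A.τ k * ‖A.d k‖ := mul_nonneg (hτpos k).le (norm_nonneg _)
  calc 1/α * Real.sqrt (pmin * σ * a / τmax) * ‖A.x (k+1) - A.x k‖
      = Real.sqrt (pmin * σ * a / τmax) * (1/α * ‖A.x (k+1) - A.x k‖) := by ring
    _ ≤ Real.sqrt (pmin * σ * a / τmax) * (A.τ k * ‖A.d k‖) :=
        mul_le_mul_of_nonneg_left h6 (Real.sqrt_nonneg _)
    _ = Real.sqrt (pmin * σ * a / τmax * (A.τ k * ‖A.d k‖)^2) := by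
        rw [Real.sqrt_mul hcτnn, Real.sqrt_sq hτdnn]
    _ ≤ Real.sqrt (A.Rv k - A.Rv (k+1)) := by
        apply Real.sqrt_le_sqrt
        have h8 : pmin * σ * a / τmax * (A.τ k * ‖A.d k‖)^2
            ≤ pmin * σ * a * (A.τ k * ‖A.d k‖^2) := by
          rw [div_mul_eq_mul_div, div_le_iff₀ hτmaxpos]
          nlinarith [mul_le_mul_of_nonneg_left (hτle k)
            (mul_nonneg hcnn (mul_nonneg (hτpos k).le (sq_nonneg ‖A.d k‖)))]
        linarith [hDk]

end
end
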